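/- Let p be an odd prime, ψ an additive character of ℚ_p of conductor ℤ_p, r ≥ 0 an integer, and φ'_r as in the context. Let w = [[0,1],[−1,0]] and n(y) = [[1,y],[0,1]]. For α ∈ ℚ_pˣ put Ψ'(α) = Σ_{s∈ℤ} ∫_{‖a‖=p^s} φ'_r(w·n(α)·diag(a,1)) d^×a; for each α only finitely many summands are nonzero. Let χ : ℚ_pˣ → ℂˣ be an unramified multiplicative character with X = χ(p)⁻¹ and pX ≠ −1, and for l ∈ ℤ set S_l = (−1)^l·∫_{‖α‖=p^l} ψ(α)·χ(α)·‖α‖·Ψ'(α⁻¹) d^×α. Then only finitely many S_l are nonzero, and Σ_{l∈ℤ} S_l = (−1)^r·(pX)^{−r}·(1 − pX)/(1 + pX) + 2p²X(1 + X)/((p−1)(1 + pX)). -/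

import Mathlib

open MeasureTheory Matrix

noncomputable section

variable (p : ℕ) [Fact p.Prime]

instance : MeasurableSpace ℚ_[p] := borel _
instance : BorelSpace ℚ_[p] := ⟨rfl⟩

namespace Stmt16

open ENNReal

lemma one_lt_p : 1 < (p : ℝ) := by exact_mod_cast (Fact.out : p.Prime).one_lt
lemma p_pos : (0:ℝ) < (p:ℝ) := lt_trans one_pos (one_lt_p p)

def B (k : ℤ) : Set ℚ_[p] := {x | ‖x‖ ≤ (p:ℝ)^k}

lemma B_eq_closedBall (k : ℤ) : B p k = Metric.closedBall (0:ℚ_[p]) ((p:ℝ)^k) := by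
  ext x; simp [B, Metric.mem_closedBall, dist_zero_right]

lemma measurableSet_B (k : ℤ) : MeasurableSet (B p k) := by
  rw [B_eq_closedBall]; exact measurableSet_closedBall

lemma isCompact_B (k : ℤ) : IsCompact (B p k) := by
  rw [B_eq_closedBall]; exact isCompact_closedBall _ _

lemma norm_mem_B_mono {k l : ℤ} (h : k ≤ l) : B p k ⊆ B p l := fun x hx =>
  le_trans hx (zpow_le_zpow_right₀ (le_of_lt (one_lt_p p)) h)

lemma mem_shell_iff (l : ℤ) (x : ℚ_[p]) :
    ‖x‖ = (p:ℝ)^l ↔ (‖x‖ ≤ (p:ℝ)^l ∧ ¬ ‖x‖ ≤ (p:ℝ)^(l-1)) := by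
  constructor
  · intro h
    refine ⟨le_of_eq h, ?_⟩
    rw [h, not_le]
    exact zpow_lt_zpow_right₀ (one_lt_p p) (by omega)
  · rintro ⟨h1, h2⟩
    have hx : x ≠ 0 := by
      rintro rfl
      exact h2 (by simpa using le_of_lt (zpow_pos (p_pos p) _))
    rw [Padic.norm_eq_zpow_neg_valuation hx] at h1 h2 ⊢
    have e1 : -x.valuation ≤ l := by
      exact_mod_cast (zpow_le_zpow_iff_right₀ (one_lt_p p)).mp h1
    have e2 : ¬ (-x.valuation ≤ l - 1) := by
      intro h
      exact h2 (zpow_le_zpow_right₀ (le_of_lt (one_lt_p p)) h)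
    congr 1
    omega

def Sh (l : ℤ) : Set ℚ_[p] := {x | ‖x‖ = (p:ℝ)^l}

lemma Sh_eq (l : ℤ) : Sh p l = B p l \ B p (l-1) := by
  ext x
  exact mem_shell_iff p l x

lemma measurableSet_Sh (l : ℤ) : MeasurableSet (Sh p l) :=
  (Sh_eq p l) ▸ (measurableSet_B p l).diff (measurableSet_B p (l-1))

lemma isCompact_Sh (l : ℤ) : IsCompact (Sh p l) := by
  refine (isCompact_B p l).of_isClosed_subset ?_ ?_
  · have : Sh p l = (fun x : ℚ_[p] => ‖x‖) ⁻¹' {(p:ℝ)^l} := rfl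
    rw [this]
    exact IsClosed.preimage continuous_norm isClosed_singleton
  · intro x hx; exact le_of_eq hx

variable (μ : Measure ℚ_[p]) [μ.IsAddHaarMeasure]

lemma measure_B_step (k : ℤ) : μ (B p (k+1)) = p * μ (B p k) := by
  classical
  set c : ℕ → ℚ_[p] := fun i => (i:ℚ_[p]) * (p:ℚ_[p])^(-(k+1)) with hc
  set T : ℕ → Set ℚ_[p] := fun i => {x | ‖x - c i‖ ≤ (p:ℝ)^k} with hT
  have hTpre : ∀ i, T i = (fun x => -(c i) + x) ⁻¹' (B p k) := by
    intro i; ext x; simp [hT, B, neg_add_eq_sub, ← sub_eq_neg_add]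
  have hTmeas : ∀ i, MeasurableSet (T i) := by
    intro i; rw [hTpre]
    exact (measurableSet_B p k).preimage (measurable_const_add _)
  have hnormc : ∀ i j : ℕ, i < p → j < p → i ≠ j → ‖c i - c j‖ = (p:ℝ)^(k+1) := by
    intro i j hi hj hij
    have : c i - c j = ((i:ℤ) - (j:ℤ) : ℤ) * (p:ℚ_[p])^(-(k+1)) := by
      push_cast [hc]; ring
    rw [this, Padic.padicNormE.mul, Padic.norm_p_zpow, neg_neg]
    have hdvd : ¬ (p:ℤ) ∣ ((i:ℤ) - (j:ℤ)) := by
      intro hd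
      have := Int.eq_zero_of_abs_lt_dvd hd (by rw [abs_lt]; omega)
      omega
    have h1 : ‖(((i:ℤ) - (j:ℤ) : ℤ) : ℚ_[p])‖ = 1 := by
      have hle := Padic.norm_int_le_one (p := p) ((i:ℤ) - (j:ℤ))
      have hlt := (Padic.norm_intCast_lt_one_iff (p := p) (k := (i:ℤ) - (j:ℤ))).not.mpr ?_
      · cases lt_or_eq_of_le hle with
        | inl h => exact absurd h hlt
        | inr h => exact h
      · exact hdvd
    rw [h1, one_mul]
  have hcover : B p (k+1) = ⋃ i ∈ Finset.range p, T i := by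
    ext x
    simp only [Set.mem_iUnion, Finset.mem_range, exists_prop]
    constructor
    · intro hx
      set y : ℚ_[p] := (p:ℚ_[p])^(k+1) * x with hy
      have hynorm : ‖y‖ ≤ 1 := by
        rw [hy, Padic.padicNormE.mul, Padic.norm_p_zpow]
        calc (p:ℝ)^(-(k+1)) * ‖x‖ ≤ (p:ℝ)^(-(k+1)) * (p:ℝ)^(k+1) :=
          mul_le_mul_of_nonneg_left hx (le_of_lt (zpow_pos (p_pos p) _))
        _ = 1 := by
            rw [← zpow_add₀ (ne_of_gt (p_pos p)), show (-(k+1)) + (k+1) = (0:ℤ) by ring, zpow_zero]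
      set z : ℤ_[p] := ⟨y, hynorm⟩ with hz
      refine ⟨z.appr 1, by simpa using z.appr_lt 1, ?_⟩
      have hspec := (PadicInt.norm_le_pow_iff_mem_span_pow (z - (z.appr 1 : ℤ_[p])) 1).mpr (z.appr_spec 1)
      have hpne : (p:ℚ_[p]) ≠ 0 := by
        exact_mod_cast (Nat.cast_ne_zero (R := ℚ_[p])).mpr (Fact.out : p.Prime).ne_zero
      have hkey : (p:ℚ_[p])^(-(k+1)) * (p:ℚ_[p])^(k+1) = 1 := by
        rw [← zpow_add₀ hpne, show (-(k+1)) + (k+1) = (0:ℤ) by ring, zpow_zero]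
      have hcoe : ((z - (z.appr 1 : ℤ_[p]) : ℤ_[p]) : ℚ_[p]) = y - ((z.appr 1 : ℕ) : ℚ_[p]) := by
        push_cast
        rfl
      have hsub : x - c (z.appr 1) = (p:ℚ_[p])^(-(k+1)) * ((z - (z.appr 1 : ℤ_[p]) : ℤ_[p]) : ℚ_[p]) := by
        rw [hcoe, mul_sub]
        congr 1
        · rw [hy, ← mul_assoc, hkey, one_mul]
        · rw [hc]; ring
      show ‖x - c (z.appr 1)‖ ≤ (p:ℝ)^k
      rw [hsub, Padic.padicNormE.mul, Padic.norm_p_zpow, neg_neg]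
      calc (p:ℝ)^(k+1) * ‖((z - (z.appr 1 : ℤ_[p]) : ℤ_[p]) : ℚ_[p])‖
          ≤ (p:ℝ)^(k+1) * (p:ℝ)^(-(1:ℤ)) := by
            refine mul_le_mul_of_nonneg_left ?_ (le_of_lt (zpow_pos (p_pos p) _))
            have : ‖((z - (z.appr 1 : ℤ_[p]) : ℤ_[p]) : ℚ_[p])‖ = ‖(z - (z.appr 1 : ℤ_[p]) : ℤ_[p])‖ := rfl
            rw [this]
            exact_mod_cast hspec
        _ = (p:ℝ)^k := by rw [← zpow_add₀ (ne_of_gt (p_pos p))]; norm_num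
    · rintro ⟨i, hi, hx⟩
      have hci : ‖c i‖ ≤ (p:ℝ)^(k+1) := by
        rw [hc]
        simp only
        rw [Padic.padicNormE.mul, Padic.norm_p_zpow, neg_neg]
        calc ‖(i:ℚ_[p])‖ * (p:ℝ)^(k+1) ≤ 1 * (p:ℝ)^(k+1) := by
              refine mul_le_mul_of_nonneg_right ?_ (le_of_lt (zpow_pos (p_pos p) _))
              exact_mod_cast Padic.norm_int_le_one (p := p) i
          _ = (p:ℝ)^(k+1) := one_mul _
      calc ‖x‖ = ‖(x - c i) + c i‖ := by ring_nf
        _ ≤ max ‖x - c i‖ ‖c i‖ := Padic.nonarchimedean _ _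
        _ ≤ (p:ℝ)^(k+1) := max_le (le_trans hx (zpow_le_zpow_right₀ (le_of_lt (one_lt_p p)) (by omega))) hci
  have hdisj : (Finset.range p : Set ℕ).PairwiseDisjoint T := by
    intro i hi j hj hij
    simp only [Finset.coe_range, Set.mem_Iio] at hi hj
    refine Set.disjoint_left.mpr ?_
    intro x hxi hxj
    have : ‖c i - c j‖ ≤ (p:ℝ)^k := by
      have : c i - c j = (x - c j) - (x - c i) := by ring
      rw [this]
      rw [sub_eq_add_neg]
      calc ‖(x - c j) + -(x - c i)‖ ≤ max ‖x - c j‖ ‖-(x - c i)‖ := Padic.nonarchimedean _ _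
        _ = max ‖x - c j‖ ‖x - c i‖ := by rw [norm_neg]
        _ ≤ (p:ℝ)^k := max_le hxj hxi
    rw [hnormc i j hi hj hij] at this
    have : (p:ℝ)^(k+1) ≤ (p:ℝ)^k := this
    have hlt : (p:ℝ)^k < (p:ℝ)^(k+1) := zpow_lt_zpow_right₀ (one_lt_p p) (by omega)
    linarith
  rw [hcover, measure_biUnion_finset hdisj (fun i _ => hTmeas i)]
  have : ∀ i ∈ Finset.range p, μ (T i) = μ (B p k) := by
    intro i _
    rw [hTpre i]
    exact measure_preimage_add μ _ _
  rw [Finset.sum_congr rfl this, Finset.sum_const, Finset.card_range, nsmul_eq_mul]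

lemma measure_B (hμ : μ {x : ℚ_[p] | ‖x‖ ≤ 1} = 1) (k : ℤ) :
    μ (B p k) = ENNReal.ofReal ((p:ℝ)^k) := by
  have hB0 : μ (B p 0) = 1 := by
    have : B p 0 = {x : ℚ_[p] | ‖x‖ ≤ 1} := by ext x; simp [B]
    rw [this, hμ]
  have hpε : (p : ℝ≥0∞) ≠ 0 := by exact_mod_cast (Fact.out : p.Prime).ne_zero
  have hpτ : (p : ℝ≥0∞) ≠ ⊤ := ENNReal.natCast_ne_top p
  have hofp : (p : ℝ≥0∞) = ENNReal.ofReal (p:ℝ) := by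
    rw [ENNReal.ofReal_natCast]
  have hmul : ∀ k : ℤ, ENNReal.ofReal ((p:ℝ)^(k+1)) = p * ENNReal.ofReal ((p:ℝ)^k) := by
    intro k
    rw [hofp, ← ENNReal.ofReal_mul (le_of_lt (p_pos p))]
    congr 1
    rw [zpow_add_one₀ (ne_of_gt (p_pos p))]
    ring
  induction k using Int.induction_on with
  | zero => rw [hB0]; simp
  | succ k ih => rw [measure_B_step p μ k, ih, hmul]
  | pred k ih =>
      rw [show (-(k:ℤ) - 1) = -((k:ℤ)+1) by ring]
      have hstep := measure_B_step p μ (-(k+1))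
      have : (-(k+1) : ℤ) + 1 = -k := by ring
      rw [this, ih] at hstep
      have h2 : ENNReal.ofReal ((p:ℝ)^(-(k:ℤ))) = p * ENNReal.ofReal ((p:ℝ)^(-(k+1:ℤ))) := by
        have := hmul (-(k+1:ℤ))
        rwa [show (-(k+1:ℤ)+1) = -(k:ℤ) by ring] at this
      rw [h2] at hstep
      exact (ENNReal.mul_right_inj hpε hpτ).mp hstep.symm

lemma measure_B_ne_top (hμ : μ {x : ℚ_[p] | ‖x‖ ≤ 1} = 1) (k : ℤ) : μ (B p k) ≠ ⊤ := by
  rw [measure_B p μ hμ k]; exact ENNReal.ofReal_ne_top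

lemma measure_Sh (hμ : μ {x : ℚ_[p] | ‖x‖ ≤ 1} = 1) (l : ℤ) :
    μ (Sh p l) = ENNReal.ofReal ((p:ℝ)^l - (p:ℝ)^(l-1)) := by
  rw [Sh_eq, measure_diff (norm_mem_B_mono p (by omega))
    (measurableSet_B p (l-1)).nullMeasurableSet (measure_B_ne_top p μ hμ (l-1)),
    measure_B p μ hμ, measure_B p μ hμ,
    ENNReal.ofReal_sub _ (le_of_lt (zpow_pos (p_pos p) _))]

lemma measure_Sh_toReal (hμ : μ {x : ℚ_[p] | ‖x‖ ≤ 1} = 1) (l : ℤ) :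
    (μ (Sh p l)).toReal = (p:ℝ)^l - (p:ℝ)^(l-1) := by
  rw [measure_Sh p μ hμ l, ENNReal.toReal_ofReal]
  have : (p:ℝ)^(l-1) ≤ (p:ℝ)^l := zpow_le_zpow_right₀ (le_of_lt (one_lt_p p)) (by omega)
  linarith

section Psi

variable (ψ : ℚ_[p] → ℂ)

lemma psi_zero (hψ1 : ∀ x : ℚ_[p], ‖x‖ ≤ 1 → ψ x = 1) : ψ 0 = 1 :=
  hψ1 0 (by simp)

lemma psi_continuous (hψadd : ∀ x y : ℚ_[p], ψ (x + y) = ψ x * ψ y)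
    (hψ1 : ∀ x : ℚ_[p], ‖x‖ ≤ 1 → ψ x = 1) : Continuous ψ := by
  rw [continuous_iff_continuousAt]
  intro x
  refine Filter.EventuallyEq.continuousAt (y := ψ x) ?_
  have hball : Metric.closedBall x 1 ∈ nhds x := Metric.closedBall_mem_nhds x one_pos
  filter_upwards [hball] with y hy
  have h1 : ‖y - x‖ ≤ 1 := by
    rw [Metric.mem_closedBall, dist_eq_norm] at hy; exact hy
  have : ψ y = ψ x * ψ (y - x) := by
    rw [← hψadd]; congr 1; ring
  rw [this, hψ1 _ h1, mul_one]

lemma integral_ball_psi (hμ : μ {x : ℚ_[p] | ‖x‖ ≤ 1} = 1)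
    (hψadd : ∀ x y : ℚ_[p], ψ (x + y) = ψ x * ψ y)
    (hψ1 : ∀ x : ℚ_[p], ‖x‖ ≤ 1 → ψ x = 1)
    (hψnt : ∃ x : ℚ_[p], ‖x‖ = (p : ℝ) ∧ ψ x ≠ 1)
    (c : ℚ_[p]) (hc : ‖c‖ = 1) (k : ℤ) :
    ∫ x in B p k, ψ (c * x) ∂μ = if k ≤ 0 then (((p:ℝ)^k : ℝ) : ℂ) else 0 := by
  by_cases hk : k ≤ 0
  · rw [if_pos hk]
    have hcong : Set.EqOn (fun x : ℚ_[p] => ψ (c * x)) (fun _ => (1:ℂ)) (B p k) := by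
      intro x hx
      have : ‖c * x‖ ≤ 1 := by
        rw [Padic.padicNormE.mul, hc, one_mul]
        calc ‖x‖ ≤ (p:ℝ)^k := hx
          _ ≤ (p:ℝ)^(0:ℤ) := zpow_le_zpow_right₀ (le_of_lt (one_lt_p p)) hk
          _ = 1 := zpow_zero _
      simp only
      rw [hψ1 _ this]
    rw [setIntegral_congr_fun (measurableSet_B p k) hcong, setIntegral_const, measureReal_def,
      measure_B p μ hμ k, ENNReal.toReal_ofReal (le_of_lt (zpow_pos (p_pos p) _))]
    simp [Complex.real_smul]
  · rw [if_neg hk]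
    push_neg at hk
    obtain ⟨x₀, hx₀norm, hx₀⟩ := hψnt
    have hc0 : c ≠ 0 := by
      intro h; rw [h] at hc; simp at hc
    set y₀ : ℚ_[p] := c⁻¹ * x₀ with hy₀
    have hcy₀ : c * y₀ = x₀ := by
      rw [hy₀, ← mul_assoc, mul_inv_cancel₀ hc0, one_mul]
    have hy₀norm : ‖y₀‖ ≤ (p:ℝ)^k := by
      rw [hy₀, Padic.padicNormE.mul, norm_inv, hc, inv_one, one_mul, hx₀norm]
      calc (p:ℝ) = (p:ℝ)^(1:ℤ) := (zpow_one _).symm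
        _ ≤ (p:ℝ)^k := zpow_le_zpow_right₀ (le_of_lt (one_lt_p p)) (by omega)
    set F : ℚ_[p] → ℂ := (B p k).indicator (fun x => ψ (c * x)) with hF
    have hmem : ∀ x : ℚ_[p], x + y₀ ∈ B p k ↔ x ∈ B p k := by
      intro x
      constructor
      · intro h
        show ‖x‖ ≤ (p:ℝ)^k
        have : ‖x‖ = ‖(x + y₀) + -y₀‖ := by ring_nf
        rw [this]
        calc ‖(x + y₀) + -y₀‖ ≤ max ‖x + y₀‖ ‖-y₀‖ := Padic.nonarchimedean _ _
          _ ≤ (p:ℝ)^k := max_le h (by rw [norm_neg]; exact hy₀norm)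
      · intro h
        show ‖x + y₀‖ ≤ (p:ℝ)^k
        calc ‖x + y₀‖ ≤ max ‖x‖ ‖y₀‖ := Padic.nonarchimedean _ _
          _ ≤ (p:ℝ)^k := max_le h hy₀norm
    have h2 : ∀ x : ℚ_[p], F (x + y₀) = ψ x₀ * F x := by
      intro x
      by_cases hx : x ∈ B p k
      · rw [hF, Set.indicator_of_mem ((hmem x).mpr hx), Set.indicator_of_mem hx]
        have : c * (x + y₀) = c * x + x₀ := by rw [mul_add, hcy₀]
        rw [this, hψadd, mul_comm]
      · rw [hF, Set.indicator_of_notMem (fun h => hx ((hmem x).mp h)),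
          Set.indicator_of_notMem hx, mul_zero]
    have h3 : ∫ x, F x ∂μ = ψ x₀ * ∫ x, F x ∂μ := by
      conv_lhs => rw [← integral_add_right_eq_self F y₀]
      simp_rw [h2]
      rw [integral_const_mul]
    have h4 : ∫ x, F x ∂μ = 0 := by
      by_contra h
      have := mul_right_cancel₀ h ((one_mul (∫ x, F x ∂μ)).trans h3)
      exact hx₀ this.symm
    rw [← integral_indicator (measurableSet_B p k), ← hF, h4]

lemma shellIntPsi (hμ : μ {x : ℚ_[p] | ‖x‖ ≤ 1} = 1)
    (hψadd : ∀ x y : ℚ_[p], ψ (x + y) = ψ x * ψ y)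
    (hψ1 : ∀ x : ℚ_[p], ‖x‖ ≤ 1 → ψ x = 1)
    (hψnt : ∃ x : ℚ_[p], ‖x‖ = (p : ℝ) ∧ ψ x ≠ 1)
    (c : ℚ_[p]) (hc : ‖c‖ = 1) (l : ℤ) :
    ∫ x in Sh p l, ψ (c * x) ∂μ =
      if l ≤ 0 then (((p:ℝ)^l - (p:ℝ)^(l-1) : ℝ) : ℂ) else if l = 1 then -1 else 0 := by
  have hcont : Continuous (fun x : ℚ_[p] => ψ (c * x)) :=
    (psi_continuous p ψ hψadd hψ1).comp (continuous_const.mul continuous_id)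
  have hint : IntegrableOn (fun x : ℚ_[p] => ψ (c * x)) (B p l) μ :=
    hcont.continuousOn.integrableOn_compact (isCompact_B p l)
  rw [Sh_eq, integral_diff (measurableSet_B p (l-1)) hint (norm_mem_B_mono p (by omega)),
    integral_ball_psi p μ ψ hμ hψadd hψ1 hψnt c hc l,
    integral_ball_psi p μ ψ hμ hψadd hψ1 hψnt c hc (l-1)]
  by_cases hl : l ≤ 0
  · rw [if_pos hl, if_pos hl, if_pos (by omega : l - 1 ≤ 0)]
    push_cast
    ring
  · rw [if_neg hl, if_neg hl]
    by_cases hl1 : l = 1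
    · subst hl1
      norm_num
    · rw [if_neg hl1, if_neg (by omega : ¬ l - 1 ≤ 0), sub_zero]

end Psi
section Phi

variable (r : ℕ) (ψ : ℚ_[p] → ℂ) (φ : Matrix (Fin 2) (Fin 2) ℚ_[p] → ℂ)

lemma phi_eval
    (hφN : ∀ (x : ℚ_[p]) (g : Matrix (Fin 2) (Fin 2) ℚ_[p]),
      φ (!![1, x; 0, 1] * g) = ψ (-x) * φ g)
    (hφK : ∀ (g k : Matrix (Fin 2) (Fin 2) ℚ_[p]),
      (∀ i j, ‖k i j‖ ≤ 1) → ‖k.det‖ = 1 → φ (g * k) = φ g)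
    (hφZ : ∀ (c : ℚ_[p]) (g : Matrix (Fin 2) (Fin 2) ℚ_[p]), c ≠ 0 →
      φ ((c • (1 : Matrix (Fin 2) (Fin 2) ℚ_[p])) * g) = φ g)
    (hφval : ∀ α : ℚ_[p],
      φ !![α, 0; 0, 1] = if ‖α‖ = (p : ℝ) ^ (-(r : ℤ)) then 1 else 0)
    (a α : ℚ_[p]) (ha : a ≠ 0) :
    φ (!![0, 1; -1, 0] * !![1, α; 0, 1] * !![a, 0; 0, 1]) =
      if ‖a‖ ≤ ‖α‖ then
        ψ α⁻¹ * (if ‖a‖ = (p:ℝ)^(-(r:ℤ)) * ‖α‖^2 then 1 else 0)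
      else (if ‖a‖ = (p:ℝ)^((r:ℤ)) then 1 else 0) := by
  have hsmul : ∀ c : ℚ_[p], c • (1 : Matrix (Fin 2) (Fin 2) ℚ_[p]) = !![c,0;0,c] := by
    intro c; ext i j; fin_cases i <;> fin_cases j <;> simp [Matrix.one_apply]
  have hM : !![(0:ℚ_[p]),1;-1,0] * !![1,α;0,1] * !![a,0;0,1] = !![0,1;-a,-α] := by
    ext i j; fin_cases i <;> fin_cases j <;> simp [Matrix.mul_apply, Fin.sum_univ_two]
  rw [hM]
  by_cases hle : ‖a‖ ≤ ‖α‖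
  · rw [if_pos hle]
    have hα : α ≠ 0 := by
      intro h
      rw [h, norm_zero] at hle
      exact ha (norm_eq_zero.mp (le_antisymm hle (norm_nonneg a)))
    have hdec : !![(0:ℚ_[p]),1;-a,-α] =
        !![(1:ℚ_[p]), -α⁻¹; 0,1] * (!![-(a/α), 0; 0, -α] * !![1,0; a/α, 1]) := by
      ext i j; fin_cases i <;> fin_cases j <;>
        simp [Matrix.mul_apply, Fin.sum_univ_two] <;> field_simp <;> ring
    rw [hdec, hφN, neg_neg]
    congr 1
    have hK : φ (!![-(a/α), 0; 0, -α] * !![1,0; a/α, 1]) = φ !![-(a/α), 0; 0, -α] := by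
      refine hφK _ _ ?_ ?_
      · intro i j; fin_cases i <;> fin_cases j <;> simp
        · exact div_le_one_of_le₀ hle (norm_nonneg _)
      · simp [Matrix.det_fin_two_of]
    rw [hK]
    have hdec2 : !![-(a/α), 0; 0, -α] = ((-α) • (1 : Matrix (Fin 2) (Fin 2) ℚ_[p])) * !![a/(α*α),0;0,1] := by
      rw [hsmul]
      ext i j; fin_cases i <;> fin_cases j <;>
        simp [Matrix.mul_apply, Fin.sum_univ_two] <;> field_simp <;> ring
    rw [hdec2, hφZ _ _ (neg_ne_zero.mpr hα), hφval]
    congr 1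
    have hαn : (0:ℝ) < ‖α‖ := norm_pos_iff.mpr hα
    rw [norm_div, Padic.padicNormE.mul, div_eq_iff (by positivity), eq_iff_iff]
    constructor <;> intro h <;> rw [h] <;> ring
  · rw [if_neg hle]
    push_neg at hle
    have hdec : !![(0:ℚ_[p]),1;-a,-α] = !![(-1:ℚ_[p]),0;0,-a] * !![0,-1;1,α/a] := by
      ext i j; fin_cases i <;> fin_cases j <;>
        simp [Matrix.mul_apply, Fin.sum_univ_two] <;> field_simp
    rw [hdec]
    have hK : φ (!![(-1:ℚ_[p]),0;0,-a] * !![0,-1;1,α/a]) = φ !![(-1:ℚ_[p]),0;0,-a] := by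
      refine hφK _ _ ?_ ?_
      · intro i j; fin_cases i <;> fin_cases j <;> simp
        · exact div_le_one_of_le₀ (le_of_lt hle) (norm_nonneg _)
      · simp [Matrix.det_fin_two_of]
    rw [hK]
    have hdec2 : !![(-1:ℚ_[p]),0;0,-a] = ((-1 : ℚ_[p]) • (1 : Matrix (Fin 2) (Fin 2) ℚ_[p])) * !![1,0;0,a] := by
      rw [hsmul]
      ext i j; fin_cases i <;> fin_cases j <;> simp [Matrix.mul_apply, Fin.sum_univ_two]
    rw [hdec2, hφZ _ _ (by norm_num)]
    have hdec3 : !![(1:ℚ_[p]),0;0,a] = (a • (1 : Matrix (Fin 2) (Fin 2) ℚ_[p])) * !![a⁻¹,0;0,1] := by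
      rw [hsmul]
      ext i j; fin_cases i <;> fin_cases j <;> simp [Matrix.mul_apply, Fin.sum_univ_two] <;> field_simp
    rw [hdec3, hφZ _ _ ha, hφval]
    congr 1
    rw [norm_inv, eq_iff_iff, _root_.zpow_neg]
    exact inv_inj

end Phi
section Chi

variable (χ : ℚ_[p] → ℂ)

lemma chi_shell
    (hχmul : ∀ a b : ℚ_[p], a ≠ 0 → b ≠ 0 → χ (a * b) = χ a * χ b)
    (hχun : ∀ u : ℚ_[p], ‖u‖ = 1 → χ u = 1)
    (l : ℤ) (α : ℚ_[p]) (hα : ‖α‖ = (p:ℝ)^l) : χ α = (χ (p:ℚ_[p]))^(-l) := by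
  have hppQ : (p:ℚ_[p]) ≠ 0 := by
    exact_mod_cast (Nat.cast_ne_zero (R := ℚ_[p])).mpr (Fact.out : p.Prime).ne_zero
  have hα0 : α ≠ 0 := by
    intro h; rw [h, norm_zero] at hα
    exact absurd hα.symm (ne_of_gt (zpow_pos (p_pos p) _))
  have hinv : ∀ x : ℚ_[p], x ≠ 0 → χ x * χ x⁻¹ = 1 := by
    intro x hx
    rw [← hχmul x x⁻¹ hx (inv_ne_zero hx), mul_inv_cancel₀ hx]
    exact hχun 1 (by simp)
  have hpow : ∀ n : ℕ, χ ((p:ℚ_[p])^n) = (χ (p:ℚ_[p]))^n := by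
    intro n
    induction n with
    | zero => simpa using hχun 1 (by simp)
    | succ n ih =>
        rw [pow_succ, hχmul _ _ (pow_ne_zero n hppQ) hppQ, ih, pow_succ]
  have hzpow : ∀ n : ℤ, χ ((p:ℚ_[p])^n) = (χ (p:ℚ_[p]))^n := by
    intro n
    rcases Int.eq_nat_or_neg n with ⟨m, rfl | rfl⟩
    · rw [zpow_natCast, zpow_natCast]; exact hpow m
    · have h1 : (p:ℚ_[p])^(-(m:ℤ)) = ((p:ℚ_[p])^m)⁻¹ := by
        rw [_root_.zpow_neg, zpow_natCast]
      rw [h1]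
      have h2 := hinv ((p:ℚ_[p])^m) (pow_ne_zero m hppQ)
      rw [hpow] at h2
      have h3 : χ (((p:ℚ_[p])^m)⁻¹) = ((χ (p:ℚ_[p]))^m)⁻¹ :=
        eq_inv_of_mul_eq_one_right (by rw [mul_comm] at h2 ⊢; exact h2)
      rw [h3, _root_.zpow_neg, zpow_natCast]
  set u : ℚ_[p] := (p:ℚ_[p])^l * α with hu
  have hunorm : ‖u‖ = 1 := by
    rw [hu, Padic.padicNormE.mul, Padic.norm_p_zpow, hα, ← zpow_add₀ (ne_of_gt (p_pos p))]
    rw [show -l + l = (0:ℤ) by ring, zpow_zero]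
  have hαu : α = (p:ℚ_[p])^(-l) * u := by
    rw [hu, ← mul_assoc, ← zpow_add₀ hppQ, show -l + l = (0:ℤ) by ring, zpow_zero, one_mul]
  rw [hαu, hχmul _ _ (zpow_ne_zero _ hppQ) (by rw [← norm_pos_iff, hunorm]; norm_num),
    hχun u hunorm, mul_one, hzpow]

end Chi

section IshEval

variable (μ : Measure ℚ_[p]) [μ.IsAddHaarMeasure] (r : ℕ)
variable (ψ : ℚ_[p] → ℂ) (φ : Matrix (Fin 2) (Fin 2) ℚ_[p] → ℂ)

lemma Ish_eval (hμ : μ {x : ℚ_[p] | ‖x‖ ≤ 1} = 1)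
    (hφN : ∀ (x : ℚ_[p]) (g : Matrix (Fin 2) (Fin 2) ℚ_[p]),
      φ (!![1, x; 0, 1] * g) = ψ (-x) * φ g)
    (hφK : ∀ (g k : Matrix (Fin 2) (Fin 2) ℚ_[p]),
      (∀ i j, ‖k i j‖ ≤ 1) → ‖k.det‖ = 1 → φ (g * k) = φ g)
    (hφZ : ∀ (c : ℚ_[p]) (g : Matrix (Fin 2) (Fin 2) ℚ_[p]), c ≠ 0 →
      φ ((c • (1 : Matrix (Fin 2) (Fin 2) ℚ_[p])) * g) = φ g)
    (hφval : ∀ α : ℚ_[p],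
      φ !![α, 0; 0, 1] = if ‖α‖ = (p : ℝ) ^ (-(r : ℤ)) then 1 else 0)
    (s m : ℤ) (α : ℚ_[p]) (hα : ‖α‖ = (p:ℝ)^m) :
    ((1 - 1/(p : ℝ))⁻¹ • ∫ a in {a : ℚ_[p] | ‖a‖ = (p : ℝ) ^ s},
        (‖a‖ : ℂ)⁻¹ * φ (!![0, 1; -1, 0] * !![1, α; 0, 1] * !![a, 0; 0, 1]) ∂μ)
    = if s ≤ m then (if s = 2*m - (r:ℤ) then ψ α⁻¹ else 0)
      else (if s = (r:ℤ) then 1 else 0) := by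
  have hpR : (0:ℝ) < (p:ℝ) := p_pos p
  have hp1R : (1:ℝ) < (p:ℝ) := one_lt_p p
  set V : ℂ := if s ≤ m then (if s = 2*m - (r:ℤ) then ψ α⁻¹ else 0)
      else (if s = (r:ℤ) then 1 else 0) with hV
  have hset : {a : ℚ_[p] | ‖a‖ = (p : ℝ) ^ s} = Sh p s := rfl
  have hcong : Set.EqOn
      (fun a : ℚ_[p] => (‖a‖ : ℂ)⁻¹ * φ (!![0, 1; -1, 0] * !![1, α; 0, 1] * !![a, 0; 0, 1]))
      (fun _ => ((((p:ℝ)^(-s) : ℝ)) : ℂ) * V) (Sh p s) := by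
    intro a haS
    have hanorm : ‖a‖ = (p:ℝ)^s := haS
    have ha0 : a ≠ 0 := by
      intro h; rw [h, norm_zero] at hanorm
      exact absurd hanorm.symm (ne_of_gt (zpow_pos hpR _))
    simp only
    rw [phi_eval p r ψ φ hφN hφK hφZ hφval a α ha0, hanorm, hα]
    congr 1
    · rw [_root_.zpow_neg, Complex.ofReal_inv]
    · rw [hV]
      have hc1 : ((p:ℝ)^s ≤ (p:ℝ)^m) = (s ≤ m) := by
        rw [eq_iff_iff]; exact zpow_le_zpow_iff_right₀ hp1R
      have hc2 : ((p:ℝ)^s = (p:ℝ)^(-(r:ℤ)) * ((p:ℝ)^m)^2) = (s = 2*m - (r:ℤ)) := by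
        rw [eq_iff_iff]
        have : (p:ℝ)^(-(r:ℤ)) * ((p:ℝ)^m)^2 = (p:ℝ)^(2*m - (r:ℤ)) := by
          rw [sq, ← zpow_add₀ (ne_of_gt hpR), ← zpow_add₀ (ne_of_gt hpR)]
          congr 1; ring
        rw [this]
        exact zpow_right_inj₀ hpR (ne_of_gt hp1R)
      have hc3 : ((p:ℝ)^s = (p:ℝ)^((r:ℤ))) = (s = (r:ℤ)) := by
        rw [eq_iff_iff]; exact zpow_right_inj₀ hpR (ne_of_gt hp1R)
      simp only [hc1, hc2, hc3]
      by_cases h1 : s ≤ m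
      · rw [if_pos h1, if_pos h1, mul_ite, mul_one, mul_zero]
      · rw [if_neg h1, if_neg h1]
  rw [hset, setIntegral_congr_fun (measurableSet_Sh p s) hcong, setIntegral_const, measureReal_def,
    measure_Sh_toReal p μ hμ]
  rw [Complex.real_smul, Complex.real_smul, ← mul_assoc, ← mul_assoc, ← Complex.ofReal_mul,
    ← Complex.ofReal_mul]
  have hkey : ((1 - 1/(p:ℝ))⁻¹ * ((p:ℝ)^s - (p:ℝ)^(s-1)) * (p:ℝ)^(-s) : ℝ) = 1 := by
    have hpne : (p:ℝ) ≠ 0 := ne_of_gt hpR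
    have hzs : (p:ℝ)^s ≠ 0 := zpow_ne_zero _ hpne
    have h1p : (1 - 1/(p:ℝ)) ≠ 0 := by
      have : 1/(p:ℝ) < 1 := by
        rw [div_lt_one hpR]; exact hp1R
      linarith
    rw [zpow_sub_one₀ hpne, _root_.zpow_neg,
      show (p:ℝ)^s - (p:ℝ)^s * (p:ℝ)⁻¹ = (p:ℝ)^s * (1 - 1/(p:ℝ)) from by ring,
      show (1 - 1/(p:ℝ))⁻¹ * ((p:ℝ)^s * (1 - 1/(p:ℝ))) * ((p:ℝ)^s)⁻¹
        = ((1 - 1/(p:ℝ))⁻¹ * (1 - 1/(p:ℝ))) * ((p:ℝ)^s * ((p:ℝ)^s)⁻¹) from by ring,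
      inv_mul_cancel₀ h1p, mul_inv_cancel₀ hzs, one_mul]
  rw [hkey, Complex.ofReal_one, one_mul]

end IshEval
end Stmt16

/-- Proposition 3.2, non-split case: the Fourier transform
`Σ_l S_l = ∫ (θ,α)ψ(α)χ(α)|α| Ψ'(α⁻¹,φ'_r) d^×α` (the Hilbert symbol `(θ,α)` giving
the factor `(−1)^l` on the shell `‖α‖ = p^l`) equals
`(−1)^r(pX)^{−r}(1−pX)/(1+pX) + 2p²X(1+X)/((p−1)(1+pX))` for unramified `χ`. -/
theorem stmt_16 (hp : p ≠ 2) (μ : Measure ℚ_[p]) [μ.IsAddHaarMeasure]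
    (hμ : μ {x : ℚ_[p] | ‖x‖ ≤ 1} = 1)
    (ψ : ℚ_[p] → ℂ)
    (hψadd : ∀ x y : ℚ_[p], ψ (x + y) = ψ x * ψ y)
    (hψ1 : ∀ x : ℚ_[p], ‖x‖ ≤ 1 → ψ x = 1)
    (hψnt : ∃ x : ℚ_[p], ‖x‖ = (p : ℝ) ∧ ψ x ≠ 1)
    (r : ℕ)
    -- the element `φ'_r` of `C_c(N'\H/K', ψ_{N'})`
    (φ : Matrix (Fin 2) (Fin 2) ℚ_[p] → ℂ)
    (hφN : ∀ (x : ℚ_[p]) (g : Matrix (Fin 2) (Fin 2) ℚ_[p]),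
      φ (!![1, x; 0, 1] * g) = ψ (-x) * φ g)
    (hφK : ∀ (g k : Matrix (Fin 2) (Fin 2) ℚ_[p]),
      (∀ i j, ‖k i j‖ ≤ 1) → ‖k.det‖ = 1 → φ (g * k) = φ g)
    (hφZ : ∀ (c : ℚ_[p]) (g : Matrix (Fin 2) (Fin 2) ℚ_[p]), c ≠ 0 →
      φ ((c • (1 : Matrix (Fin 2) (Fin 2) ℚ_[p])) * g) = φ g)
    (hφval : ∀ α : ℚ_[p],
      φ !![α, 0; 0, 1] = if ‖α‖ = (p : ℝ) ^ (-(r : ℤ)) then 1 else 0)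
    -- the unramified multiplicative character `χ`
    (χ : ℚ_[p] → ℂ)
    (hχmul : ∀ a b : ℚ_[p], a ≠ 0 → b ≠ 0 → χ (a * b) = χ a * χ b)
    (hχun : ∀ u : ℚ_[p], ‖u‖ = 1 → χ u = 1)
    (X : ℂ) (hX : X = (χ (p : ℚ_[p]))⁻¹) (hpX : (p : ℂ) * X ≠ -1)
    -- the inner shell integrals, the orbital integral `Ψ'(α) = Ψ'(α, φ'_r)`,
    -- and the Fourier coefficients `S_l`
    (Ish : ℤ → ℚ_[p] → ℂ)
    (hIsh : ∀ (s : ℤ) (α : ℚ_[p]), Ish s α = (1 - 1/(p : ℝ))⁻¹ •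
      ∫ a in {a : ℚ_[p] | ‖a‖ = (p : ℝ) ^ s},
        (‖a‖ : ℂ)⁻¹ * φ (!![0, 1; -1, 0] * !![1, α; 0, 1] * !![a, 0; 0, 1]) ∂μ)
    (Ψ' : ℚ_[p] → ℂ)
    (hΨ' : ∀ α : ℚ_[p], Ψ' α = ∑ᶠ s : ℤ, Ish s α)
    (S : ℤ → ℂ)
    (hS : ∀ l : ℤ, S l = (-1 : ℂ) ^ l * ((1 - 1/(p : ℝ))⁻¹ •
      ∫ α in {α : ℚ_[p] | ‖α‖ = (p : ℝ) ^ l},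
        (‖α‖ : ℂ)⁻¹ * (ψ α * χ α * (‖α‖ : ℂ) * Ψ' α⁻¹) ∂μ)) :
    -- for each α only finitely many summands are nonzero
    (∀ α : ℚ_[p], α ≠ 0 → {s : ℤ | Ish s α ≠ 0}.Finite)
    -- only finitely many S_l are nonzero
    ∧ {l : ℤ | S l ≠ 0}.Finite
    -- value of the Fourier transform
    ∧ ∑ᶠ l : ℤ, S l
        = (-1 : ℂ) ^ r * ((p : ℂ) * X) ^ (-(r : ℤ)) * ((1 - (p : ℂ) * X) / (1 + (p : ℂ) * X))
          + 2 * (p : ℂ) ^ 2 * X * (1 + X) / (((p : ℂ) - 1) * (1 + (p : ℂ) * X)) := by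
  classical
  have hpPrime : p.Prime := Fact.out
  have hpR : (0:ℝ) < (p:ℝ) := Stmt16.p_pos p
  have hp1R : (1:ℝ) < (p:ℝ) := Stmt16.one_lt_p p
  have hpneR : (p:ℝ) ≠ 0 := ne_of_gt hpR
  have hppQ : (p:ℚ_[p]) ≠ 0 := Nat.cast_ne_zero.mpr hpPrime.ne_zero
  have hp0C : (p:ℂ) ≠ 0 := Nat.cast_ne_zero.mpr hpPrime.ne_zero
  have hp1C : (p:ℂ) ≠ 1 := by
    intro h
    have : p = 1 := by exact_mod_cast h
    exact hpPrime.ne_one this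
  have h1pR : (1 - 1/(p:ℝ)) ≠ 0 := by
    have : 1/(p:ℝ) < 1 := by rw [div_lt_one hpR]; exact hp1R
    linarith
  -- X ≠ 0
  have hχ1 : χ 1 = 1 := hχun 1 (by simp)
  have hχp0 : χ (p:ℚ_[p]) ≠ 0 := by
    intro h
    have h2 := hχmul (p:ℚ_[p]) ((p:ℚ_[p]))⁻¹ hppQ (inv_ne_zero hppQ)
    rw [mul_inv_cancel₀ hppQ, hχ1, h, zero_mul] at h2
    exact one_ne_zero h2
  have hX0 : X ≠ 0 := by rw [hX]; exact inv_ne_zero hχp0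
  -- χ on shells
  have hchiX : ∀ (l : ℤ) (α : ℚ_[p]), ‖α‖ = (p:ℝ)^l → χ α = X^l := by
    intro l α hα
    rw [Stmt16.chi_shell p χ hχmul hχun l α hα, hX, _root_.zpow_neg, ← _root_.inv_zpow]
  -- ‖2‖ = 1
  have h2norm : ‖(2:ℚ_[p])‖ = 1 := by
    have hcast : ((2:ℤ):ℚ_[p]) = (2:ℚ_[p]) := by norm_num
    have hle : ‖(2:ℚ_[p])‖ ≤ 1 := by rw [← hcast]; exact Padic.norm_int_le_one 2
    have hlt : ¬ ‖(2:ℚ_[p])‖ < 1 := by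
      rw [← hcast, Padic.norm_intCast_lt_one_iff]
      intro hd
      have h2p : (p:ℤ) ≤ 2 := Int.le_of_dvd (by norm_num) hd
      have hge : (2:ℤ) ≤ (p:ℤ) := by exact_mod_cast hpPrime.two_le
      have : p = 2 := by omega
      exact hp this
    rcases lt_or_eq_of_le hle with h | h
    · exact absurd h hlt
    · exact h
  have h1norm : ‖(1:ℚ_[p])‖ = 1 := by simp
  -- Ish evaluation
  have hIshval : ∀ (s m : ℤ) (α : ℚ_[p]), ‖α‖ = (p:ℝ)^m →
      Ish s α = if s ≤ m then (if s = 2*m - (r:ℤ) then ψ α⁻¹ else 0)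
        else (if s = (r:ℤ) then 1 else 0) := by
    intro s m α hα
    rw [hIsh s α]
    exact Stmt16.Ish_eval p μ r ψ φ hμ hφN hφK hφZ hφval s m α hα
  -- Ψ' evaluation
  have hΨval : ∀ (m : ℤ) (α : ℚ_[p]), ‖α‖ = (p:ℝ)^m →
      Ψ' α = (if m ≤ (r:ℤ) then ψ α⁻¹ else 0) + (if m < (r:ℤ) then 1 else 0) := by
    intro m α hα
    rw [hΨ' α]
    have hsupp : Function.support (fun s => Ish s α)
        ⊆ (({2*m - (r:ℤ), (r:ℤ)} : Finset ℤ) : Set ℤ) := by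
      intro s hs
      simp only [Function.mem_support] at hs
      by_contra hmem
      simp only [Finset.coe_insert, Finset.coe_singleton, Set.mem_insert_iff,
        Set.mem_singleton_iff, not_or] at hmem
      apply hs
      rw [hIshval s m α hα]
      by_cases h1 : s ≤ m
      · rw [if_pos h1, if_neg hmem.1]
      · rw [if_neg h1, if_neg hmem.2]
    rw [finsum_eq_finset_sum_of_support_subset _ hsupp]
    rcases lt_trichotomy m (r:ℤ) with hm | hm | hm
    · have hne : 2*m - (r:ℤ) ≠ (r:ℤ) := by omega
      rw [Finset.sum_pair hne, hIshval _ m α hα, hIshval _ m α hα,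
        if_pos (show 2*m - (r:ℤ) ≤ m by omega), if_pos rfl,
        if_neg (show ¬ (r:ℤ) ≤ m by omega), if_pos rfl,
        if_pos (le_of_lt hm), if_pos hm]
    · rw [show 2*m - (r:ℤ) = (r:ℤ) by omega, Finset.pair_eq_singleton,
        Finset.sum_singleton, hIshval _ m α hα,
        if_pos (show (r:ℤ) ≤ m by omega), if_pos (by omega),
        if_pos (show m ≤ (r:ℤ) by omega), if_neg (show ¬ m < (r:ℤ) by omega), add_zero]
    · have hne : 2*m - (r:ℤ) ≠ (r:ℤ) := by omega
      rw [Finset.sum_pair hne, hIshval _ m α hα, hIshval _ m α hα,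
        if_neg (show ¬ 2*m - (r:ℤ) ≤ m by omega), if_neg (show ¬ 2*m - (r:ℤ) = (r:ℤ) by omega),
        if_pos (show (r:ℤ) ≤ m by omega), if_neg (show ¬ (r:ℤ) = 2*m - (r:ℤ) by omega),
        if_neg (show ¬ m ≤ (r:ℤ) by omega), if_neg (show ¬ m < (r:ℤ) by omega)]
  -- Part 1
  have part1 : ∀ α : ℚ_[p], α ≠ 0 → {s : ℤ | Ish s α ≠ 0}.Finite := by
    intro α hα0
    have hα : ‖α‖ = (p:ℝ)^(-α.valuation) := Padic.norm_eq_zpow_neg_valuation hα0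
    refine Set.Finite.subset
      ((Set.finite_singleton (r:ℤ)).insert (2*(-α.valuation) - (r:ℤ))) ?_
    intro s hs
    simp only [Set.mem_setOf_eq] at hs
    rw [hIshval s _ α hα] at hs
    by_contra hmem
    simp only [Set.mem_insert_iff, Set.mem_singleton_iff, not_or] at hmem
    apply hs
    by_cases h1 : s ≤ -α.valuation
    · rw [if_pos h1, if_neg hmem.1]
    · rw [if_neg h1, if_neg hmem.2]
  -- abbreviations
  set κ : ℂ := (((1 - 1/(p:ℝ))⁻¹ : ℝ) : ℂ) with hκ
  set E : ℤ → ℂ := fun l => if l ≤ 0 then (((p:ℝ)^l - (p:ℝ)^(l-1) : ℝ) : ℂ)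
      else if l = 1 then -1 else 0 with hE
  -- S evaluation
  have hSval : ∀ l : ℤ, S l = (-1:ℂ)^l * (κ * (X^l *
      ((if -l ≤ (r:ℤ) then E l else 0) + (if -l < (r:ℤ) then E l else 0)))) := by
    intro l
    rw [hS l]
    have hsmul : ∀ z : ℂ, (1 - 1/(p:ℝ))⁻¹ • z = κ * z := by
      intro z; rw [hκ, Complex.real_smul]
    rw [hsmul]
    congr 2
    have hint : ∀ c : ℚ_[p], IntegrableOn (fun x : ℚ_[p] => ψ (c * x)) (Stmt16.Sh p l) μ :=
      fun c => (((Stmt16.psi_continuous p ψ hψadd hψ1).comp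
        (continuous_const.mul continuous_id)).continuousOn).integrableOn_compact
        (Stmt16.isCompact_Sh p l)
    have hsetl : {α : ℚ_[p] | ‖α‖ = (p:ℝ)^l} = Stmt16.Sh p l := rfl
    rw [hsetl]
    have hcongbase : Set.EqOn
        (fun α : ℚ_[p] => (‖α‖:ℂ)⁻¹ * (ψ α * χ α * (‖α‖:ℂ) * Ψ' α⁻¹))
        (fun α : ℚ_[p] => X^l * ((if -l ≤ (r:ℤ) then ψ (2*α) else 0)
          + (if -l < (r:ℤ) then ψ (1*α) else 0))) (Stmt16.Sh p l) := by
      intro α hαS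
      have hαnorm : ‖α‖ = (p:ℝ)^l := hαS
      have hα0 : α ≠ 0 := by
        intro h; rw [h, norm_zero] at hαnorm
        exact absurd hαnorm.symm (ne_of_gt (zpow_pos hpR _))
      have hαinv : ‖α⁻¹‖ = (p:ℝ)^(-l) := by
        rw [norm_inv, hαnorm, ← _root_.zpow_neg]
      have hΨv := hΨval (-l) α⁻¹ hαinv
      rw [inv_inv] at hΨv
      have hχv : χ α = X^l := hchiX l α hαnorm
      have hnc : (‖α‖:ℂ) ≠ 0 := by
        rw [hαnorm]
        exact_mod_cast Complex.ofReal_ne_zero.mpr (ne_of_gt (zpow_pos hpR l))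
      simp only
      rw [hΨv, hχv]
      have hψ2 : ψ α * ψ α = ψ (2*α) := by rw [two_mul, hψadd]
      have expand : (‖α‖:ℂ)⁻¹ * (ψ α * X^l * (‖α‖:ℂ)
          * ((if -l ≤ (r:ℤ) then ψ α else 0) + (if -l < (r:ℤ) then 1 else 0)))
          = X^l * (ψ α * ((if -l ≤ (r:ℤ) then ψ α else 0) + (if -l < (r:ℤ) then 1 else 0))) := by
        field_simp
      rw [expand, one_mul α]
      by_cases hd : -l ≤ (r:ℤ)
      · by_cases hc : -l < (r:ℤ)
        · rw [if_pos hd, if_pos hc, if_pos hd, if_pos hc, mul_add, hψ2, mul_one]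
        · rw [if_pos hd, if_neg hc, if_pos hd, if_neg hc, add_zero, add_zero, hψ2]
      · have hc : ¬ -l < (r:ℤ) := by omega
        rw [if_neg hd, if_neg hc, if_neg hd, if_neg hc]
        simp
    rw [setIntegral_congr_fun (Stmt16.measurableSet_Sh p l) hcongbase, integral_const_mul]
    congr 1
    by_cases hd : -l ≤ (r:ℤ)
    · by_cases hc : -l < (r:ℤ)
      · simp only [if_pos hd, if_pos hc]
        rw [integral_add (hint 2) (hint 1),
          Stmt16.shellIntPsi p μ ψ hμ hψadd hψ1 hψnt 2 h2norm l,
          Stmt16.shellIntPsi p μ ψ hμ hψadd hψ1 hψnt 1 h1norm l]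
      · simp only [if_pos hd, if_neg hc, add_zero]
        rw [Stmt16.shellIntPsi p μ ψ hμ hψadd hψ1 hψnt 2 h2norm l]
    · have hc : ¬ -l < (r:ℤ) := by omega
      simp only [if_neg hd, if_neg hc, add_zero, integral_zero]
  -- vanishing
  have hS_high : ∀ l : ℤ, 1 < l → S l = 0 := by
    intro l hl
    rw [hSval l]
    have hE0 : E l = 0 := by
      simp only [hE]
      rw [if_neg (by omega), if_neg (by omega)]
    rw [hE0]
    simp
  have hS_low : ∀ l : ℤ, l < -(r:ℤ) → S l = 0 := by
    intro l hl
    rw [hSval l, if_neg (by omega), if_neg (by omega)]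
    simp
  set T : Finset ℤ := insert 1 ((Finset.range (r+1)).image (fun j : ℕ => -(j:ℤ))) with hT
  have hsuppS : Function.support S ⊆ (T : Set ℤ) := by
    intro l hl
    simp only [Function.mem_support] at hl
    have h1 : ¬ 1 < l := fun h => hl (hS_high l h)
    have h2 : ¬ l < -(r:ℤ) := fun h => hl (hS_low l h)
    rw [Finset.mem_coe, hT, Finset.mem_insert]
    by_cases hl1 : l = 1
    · left; exact hl1
    · right
      rw [Finset.mem_image]
      exact ⟨(-l).toNat, Finset.mem_range.mpr (by omega), by omega⟩
  have part2 : {l : ℤ | S l ≠ 0}.Finite := Set.Finite.subset T.finite_toSet hsuppS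
  refine ⟨part1, part2, ?_⟩
  -- the sum
  have hsum : ∑ᶠ l : ℤ, S l = ∑ l ∈ T, S l :=
    finsum_eq_finset_sum_of_support_subset S hsuppS
  have h1notin : (1:ℤ) ∉ (Finset.range (r+1)).image (fun j : ℕ => -(j:ℤ)) := by
    rw [Finset.mem_image]
    rintro ⟨j, hj, hje⟩
    omega
  have hinj : ∀ a ∈ Finset.range (r+1), ∀ b ∈ Finset.range (r+1),
      -(a:ℤ) = -(b:ℤ) → a = b := by
    intro a _ b _ h; omega
  rw [hsum, hT, Finset.sum_insert h1notin, Finset.sum_image hinj]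
  -- S 1
  have hS1 : S 1 = 2 * κ * X := by
    rw [hSval 1]
    have hE1 : E 1 = -1 := by simp [hE]
    rw [hE1, if_pos (by omega), if_pos (by omega), zpow_one, zpow_one]
    ring
  -- w
  set w : ℂ := (-((p:ℂ) * X))⁻¹ with hw
  have hnegY : -((p:ℂ)*X) ≠ 0 := neg_ne_zero.mpr (mul_ne_zero hp0C hX0)
  have hw0 : w ≠ 0 := inv_ne_zero hnegY
  have hw1 : w ≠ 1 := by
    rw [hw]
    intro h
    rw [inv_eq_one] at h
    exact hpX (neg_eq_iff_eq_neg.mp h)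
  -- S(-j)
  have hSj : ∀ j : ℕ, j ≤ r → S (-(j:ℤ)) = (1 + if j < r then (1:ℂ) else 0) * w^j := by
    intro j hj
    rw [hSval (-(j:ℤ))]
    have hEj : E (-(j:ℤ)) = (((p:ℝ)^(-(j:ℤ)) - (p:ℝ)^(-(j:ℤ)-1) : ℝ) : ℂ) := by
      simp only [hE]
      rw [if_pos (by omega)]
    rw [hEj, if_pos (show -(-(j:ℤ)) ≤ (r:ℤ) by omega)]
    have hκE : κ * (((p:ℝ)^(-(j:ℤ)) - (p:ℝ)^(-(j:ℤ)-1) : ℝ) : ℂ) = (p:ℂ)^(-(j:ℤ)) := by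
      rw [hκ, ← Complex.ofReal_mul]
      have hre : (1 - 1/(p:ℝ))⁻¹ * ((p:ℝ)^(-(j:ℤ)) - (p:ℝ)^(-(j:ℤ)-1)) = (p:ℝ)^(-(j:ℤ)) := by
        rw [zpow_sub_one₀ hpneR,
          show (p:ℝ)^(-(j:ℤ)) - (p:ℝ)^(-(j:ℤ)) * (p:ℝ)⁻¹
            = (p:ℝ)^(-(j:ℤ)) * (1 - 1/(p:ℝ)) from by ring,
          show (1 - 1/(p:ℝ))⁻¹ * ((p:ℝ)^(-(j:ℤ)) * (1 - 1/(p:ℝ)))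
            = ((1 - 1/(p:ℝ))⁻¹ * (1 - 1/(p:ℝ))) * (p:ℝ)^(-(j:ℤ)) from by ring,
          inv_mul_cancel₀ h1pR, one_mul]
      rw [hre]
      push_cast
      ring
    have hqw : (-1:ℂ)^(-(j:ℤ)) * (X^(-(j:ℤ)) * (p:ℂ)^(-(j:ℤ))) = w^j := by
      rw [← mul_zpow, ← mul_zpow,
        show (-1:ℂ) * (X * (p:ℂ)) = -((p:ℂ) * X) from by ring,
        _root_.zpow_neg, zpow_natCast, ← inv_pow, ← hw]
    by_cases hc : -(-(j:ℤ)) < (r:ℤ)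
    · rw [if_pos hc, if_pos (show j < r by omega)]
      rw [show (-1:ℂ)^(-(j:ℤ)) * (κ * (X^(-(j:ℤ)) *
          ((((p:ℝ)^(-(j:ℤ)) - (p:ℝ)^(-(j:ℤ)-1) : ℝ) : ℂ)
            + (((p:ℝ)^(-(j:ℤ)) - (p:ℝ)^(-(j:ℤ)-1) : ℝ) : ℂ))))
          = 2 * ((-1:ℂ)^(-(j:ℤ)) * (X^(-(j:ℤ)) *
            (κ * (((p:ℝ)^(-(j:ℤ)) - (p:ℝ)^(-(j:ℤ)-1) : ℝ) : ℂ)))) from by ring,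
        hκE, hqw]
      norm_num
    · rw [if_neg hc, if_neg (show ¬ j < r by omega), add_zero]
      rw [show (-1:ℂ)^(-(j:ℤ)) * (κ * (X^(-(j:ℤ)) *
          (((p:ℝ)^(-(j:ℤ)) - (p:ℝ)^(-(j:ℤ)-1) : ℝ) : ℂ)))
          = (-1:ℂ)^(-(j:ℤ)) * (X^(-(j:ℤ)) *
            (κ * (((p:ℝ)^(-(j:ℤ)) - (p:ℝ)^(-(j:ℤ)-1) : ℝ) : ℂ))) from by ring,
        hκE, hqw]
      norm_num
  -- sum over j
  have hsum2 : ∑ j ∈ Finset.range (r+1), S (-(j:ℤ))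
      = (∑ j ∈ Finset.range (r+1), w^j) + (∑ j ∈ Finset.range r, w^j) := by
    rw [Finset.sum_congr rfl (fun j hj => hSj j (by
      have := Finset.mem_range.mp hj; omega))]
    rw [Finset.sum_congr rfl (fun j (hj : j ∈ Finset.range (r+1)) =>
      show (1 + if j < r then (1:ℂ) else 0) * w^j = w^j + (if j < r then w^j else 0) from by
        by_cases h : j < r
        · rw [if_pos h, if_pos h]; ring
        · rw [if_neg h, if_neg h]; ring)]
    rw [Finset.sum_add_distrib]
    congr 1
    rw [Finset.sum_range_succ, if_neg (lt_irrefl r), add_zero]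
    exact Finset.sum_congr rfl (fun j hj => if_pos (Finset.mem_range.mp hj))
  rw [hS1, hsum2, geom_sum_eq hw1 (r+1), geom_sum_eq hw1 r]
  -- final algebra
  have hW : (-1:ℂ)^r * ((p:ℂ)*X)^(-(r:ℤ)) = w^r := by
    have h1 : w^r = ((-((p:ℂ)*X))^r)⁻¹ := by rw [hw, inv_pow]
    have h2 : (-((p:ℂ)*X))^r = (-1:ℂ)^r * ((p:ℂ)*X)^r := by rw [neg_pow]
    rw [h1, h2, mul_inv]
    congr 1
    · have hsq : ((-1:ℂ)^r) * ((-1:ℂ)^r) = 1 := by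
        rw [← mul_pow]
        norm_num
      exact eq_inv_of_mul_eq_one_right hsq
    · rw [_root_.zpow_neg, zpow_natCast]
  rw [hW, pow_succ]
  have hκC : κ = (1 - 1/(p:ℂ))⁻¹ := by
    rw [hκ]
    push_cast
    ring
  have hden1 : (1:ℂ) + (p:ℂ)*X ≠ 0 := by
    intro h
    exact hpX (by linear_combination h)
  have hden2 : (p:ℂ) - 1 ≠ 0 := sub_ne_zero.mpr hp1C
  have hden3 : w - 1 ≠ 0 := sub_ne_zero.mpr hw1
  have hden4 : (1:ℂ) - 1/(p:ℂ) ≠ 0 := by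
    intro h
    apply hp1C
    field_simp at h
    linear_combination h
  set W : ℂ := w^r with hWr
  rw [hκC, hw]
  rw [hw] at hden3
  field_simp
  ring


end
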